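/- arXiv:1004.4492 — 3 statements merged into one kernel-verified Lean document; each statement's English description precedes it below -/
import Mathlib

section
/- (Weyl's inequality) For Hermitian matrices A, B ∈ ℂ^{N×N} with eigenvalues in nondecreasing order, μ_{i+j−N}(A+B) ≤ μ_i(A) + μ_j(B) whenever i + j ≥ N + 1, and μ_{i+j−1}(A+B) ≥ μ_i(A) + μ_j(B) whenever i + j ≤ N + 1. -/
open Matrix Finset

section WeylAux

variable {N : ℕ}

private lemma weyl_quad_repr {A : Matrix (Fin N) (Fin N) ℂ} (hA : A.IsHermitian)
    (x : EuclideanSpace ℂ (Fin N)) :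
    RCLike.re (star ⇑x ⬝ᵥ (A *ᵥ ⇑x)) =
      ∑ i, hA.eigenvalues i * ‖(inner ℂ (hA.eigenvectorBasis i) x : ℂ)‖ ^ 2 := by
  set b := hA.eigenvectorBasis
  have h1 : star ⇑x ⬝ᵥ (A *ᵥ ⇑x)
      = (inner ℂ x ((WithLp.equiv 2 _).symm (A *ᵥ ⇑x)) : ℂ) := by
    rw [EuclideanSpace.inner_eq_star_dotProduct, dotProduct_comm]; rfl
  have h2 : ∀ i, (inner ℂ (b i) ((WithLp.equiv 2 _).symm (A *ᵥ ⇑x)) : ℂ)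
      = (hA.eigenvalues i : ℂ) * inner ℂ (b i) x := by
    intro i
    have : (inner ℂ (b i) ((WithLp.equiv 2 _).symm (A *ᵥ ⇑x)) : ℂ)
        = star (A *ᵥ ⇑(b i)) ⬝ᵥ ⇑x := by
      rw [EuclideanSpace.inner_eq_star_dotProduct, dotProduct_comm]
      show star ⇑(b i) ⬝ᵥ (A *ᵥ ⇑x) = _
      rw [star_mulVec, hA.eq, dotProduct_mulVec]
    rw [this, hA.mulVec_eigenvectorBasis]
    rw [star_smul, smul_dotProduct]
    rw [EuclideanSpace.inner_eq_star_dotProduct, dotProduct_comm, star_trivial, Complex.real_smul]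
  rw [h1, ← OrthonormalBasis.sum_inner_mul_inner b]
  rw [map_sum]
  refine Finset.sum_congr rfl fun i _ => ?_
  rw [h2 i]
  have : (inner ℂ x (b i) : ℂ) = starRingEnd ℂ (inner ℂ (b i) x) := (inner_conj_symm _ _).symm
  rw [this]
  set c : ℂ := inner ℂ (b i) x
  rw [show starRingEnd ℂ c * ((hA.eigenvalues i : ℂ) * c)
      = (hA.eigenvalues i : ℂ) * (starRingEnd ℂ c * c) by ring]
  rw [RCLike.conj_mul]
  simp [RCLike.normSq_eq_def', ← Complex.ofReal_pow]

private lemma weyl_parseval (b : OrthonormalBasis (Fin N) ℂ (EuclideanSpace ℂ (Fin N)))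
    (x : EuclideanSpace ℂ (Fin N)) :
    ∑ i, ‖(inner ℂ (b i) x : ℂ)‖ ^ 2 = ‖x‖ ^ 2 := by
  have := b.sum_inner_mul_inner x x
  have h := congrArg RCLike.re this
  rw [map_sum] at h
  rw [← inner_self_eq_norm_sq (𝕜 := ℂ), ← h]
  refine Finset.sum_congr rfl fun i _ => ?_
  have : (inner ℂ x (b i) : ℂ) = starRingEnd ℂ (inner ℂ (b i) x) := (inner_conj_symm _ _).symm
  rw [this, RCLike.conj_mul]
  simp [RCLike.normSq_eq_def', ← Complex.ofReal_pow]

private lemma weyl_inner_eq_zero_of_mem_span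
    (b : OrthonormalBasis (Fin N) ℂ (EuclideanSpace ℂ (Fin N)))
    (S : Finset (Fin N)) {x : EuclideanSpace ℂ (Fin N)}
    (hx : x ∈ Submodule.span ℂ (b '' S)) {i : Fin N} (hi : i ∉ S) :
    (inner ℂ (b i) x : ℂ) = 0 := by
  have hle : Submodule.span ℂ (b '' S)
      ≤ LinearMap.ker ((innerSL ℂ (b i)) : _ →L[ℂ] ℂ).toLinearMap := by
    rw [Submodule.span_le]
    rintro _ ⟨j, hj, rfl⟩
    simp only [SetLike.mem_coe, LinearMap.mem_ker, ContinuousLinearMap.coe_coe, innerSL_apply_apply]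
    exact b.orthonormal.2 (fun h => hi (h ▸ hj))
  simpa using hle hx

private lemma weyl_finrank_span_image
    (b : OrthonormalBasis (Fin N) ℂ (EuclideanSpace ℂ (Fin N))) (S : Finset (Fin N)) :
    Module.finrank ℂ (Submodule.span ℂ (b '' S)) = S.card := by
  have li : LinearIndependent ℂ (fun s : (S : Set (Fin N)) => b s) :=
    b.orthonormal.linearIndependent.comp _ Subtype.val_injective
  rw [Set.image_eq_range, finrank_span_eq_card li]
  simp

private lemma weyl_exists_common (U V W : Submodule ℂ (EuclideanSpace ℂ (Fin N)))
    (h : 2 * N + 1 ≤ Module.finrank ℂ U + Module.finrank ℂ V + Module.finrank ℂ W) :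
    ∃ x : EuclideanSpace ℂ (Fin N), x ≠ 0 ∧ x ∈ U ∧ x ∈ V ∧ x ∈ W := by
  have hN : Module.finrank ℂ (EuclideanSpace ℂ (Fin N)) = N := by
    simp [finrank_euclideanSpace]
  have h1 := Submodule.finrank_sup_add_finrank_inf_eq U V
  have h1' := Submodule.finrank_le (U ⊔ V)
  have h2 := Submodule.finrank_sup_add_finrank_inf_eq (U ⊓ V) W
  have h2' := Submodule.finrank_le ((U ⊓ V) ⊔ W)
  have hpos : U ⊓ V ⊓ W ≠ ⊥ := by
    intro hb
    rw [hb, finrank_bot] at h2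
    omega
  obtain ⟨x, hx, hx0⟩ := Submodule.exists_mem_ne_zero_of_ne_bot hpos
  exact ⟨x, hx0, hx.1.1, hx.1.2, hx.2⟩

private lemma weyl_quad_le {A : Matrix (Fin N) (Fin N) ℂ} (hA : A.IsHermitian)
    (S : Finset (Fin N)) (μ : ℝ) (hS : ∀ t ∈ S, hA.eigenvalues t ≤ μ)
    {x : EuclideanSpace ℂ (Fin N)}
    (hx : x ∈ Submodule.span ℂ (hA.eigenvectorBasis '' S)) :
    RCLike.re (star ⇑x ⬝ᵥ (A *ᵥ ⇑x)) ≤ μ * ‖x‖ ^ 2 := by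
  rw [weyl_quad_repr hA x, ← weyl_parseval hA.eigenvectorBasis x, Finset.mul_sum]
  refine Finset.sum_le_sum fun i _ => ?_
  by_cases hi : i ∈ S
  · exact mul_le_mul_of_nonneg_right (hS i hi) (sq_nonneg _)
  · rw [weyl_inner_eq_zero_of_mem_span _ _ hx hi]
    simp

private lemma weyl_quad_ge {A : Matrix (Fin N) (Fin N) ℂ} (hA : A.IsHermitian)
    (S : Finset (Fin N)) (μ : ℝ) (hS : ∀ t ∈ S, μ ≤ hA.eigenvalues t)
    {x : EuclideanSpace ℂ (Fin N)}
    (hx : x ∈ Submodule.span ℂ (hA.eigenvectorBasis '' S)) :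
    μ * ‖x‖ ^ 2 ≤ RCLike.re (star ⇑x ⬝ᵥ (A *ᵥ ⇑x)) := by
  rw [weyl_quad_repr hA x, ← weyl_parseval hA.eigenvectorBasis x, Finset.mul_sum]
  refine Finset.sum_le_sum fun i _ => ?_
  by_cases hi : i ∈ S
  · exact mul_le_mul_of_nonneg_right (hS i hi) (sq_nonneg _)
  · rw [weyl_inner_eq_zero_of_mem_span _ _ hx hi]
    simp

private lemma weyl_quad_add {A B : Matrix (Fin N) (Fin N) ℂ} (x : EuclideanSpace ℂ (Fin N)) :
    RCLike.re (star ⇑x ⬝ᵥ ((A + B) *ᵥ ⇑x))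
      = RCLike.re (star ⇑x ⬝ᵥ (A *ᵥ ⇑x)) + RCLike.re (star ⇑x ⬝ᵥ (B *ᵥ ⇑x)) := by
  rw [add_mulVec, dotProduct_add, map_add]

end WeylAux

/-- Weyl's inequalities for eigenvalues (in nondecreasing order, 1-based indices) of sums of
Hermitian matrices: μ_{i+j−N}(A+B) ≤ μ_i(A) + μ_j(B) and μ_{i+j−1}(A+B) ≥ μ_i(A) + μ_j(B). -/
theorem stmt_8 (N : ℕ) (A B : Matrix (Fin N) (Fin N) ℂ)
    (hA : A.IsHermitian) (hB : B.IsHermitian) (hAB : (A + B).IsHermitian)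
    (p q r : Equiv.Perm (Fin N))
    (hp : Monotone (hA.eigenvalues ∘ p)) (hq : Monotone (hB.eigenvalues ∘ q))
    (hr : Monotone (hAB.eigenvalues ∘ r)) :
    (∀ i j k : Fin N, (i : ℕ) + 1 + ((j : ℕ) + 1) = N + ((k : ℕ) + 1) →
      hAB.eigenvalues (r k) ≤ hA.eigenvalues (p i) + hB.eigenvalues (q j)) ∧
    (∀ i j k : Fin N, (i : ℕ) + 1 + ((j : ℕ) + 1) = (k : ℕ) + 1 + 1 →
      hA.eigenvalues (p i) + hB.eigenvalues (q j) ≤ hAB.eigenvalues (r k)) := by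
  constructor
  · -- upper bound: i + j + 1 = N + k  (0-based)
    intro i j k hijk
    set SA := (Finset.Iic i).image p with hSA
    set SB := (Finset.Iic j).image q with hSB
    set SC := (Finset.Ici k).image r with hSC
    obtain ⟨x, hx0, hxA, hxB, hxC⟩ := weyl_exists_common
      (Submodule.span ℂ (hA.eigenvectorBasis '' SA))
      (Submodule.span ℂ (hB.eigenvectorBasis '' SB))
      (Submodule.span ℂ (hAB.eigenvectorBasis '' SC)) (by
        rw [weyl_finrank_span_image, weyl_finrank_span_image, weyl_finrank_span_image,
          hSA, hSB, hSC, Finset.card_image_of_injective _ p.injective,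
          Finset.card_image_of_injective _ q.injective,
          Finset.card_image_of_injective _ r.injective,
          Fin.card_Iic, Fin.card_Iic, Fin.card_Ici]
        have := i.isLt; have := j.isLt; have := k.isLt
        omega)
    have hxn : (0 : ℝ) < ‖x‖ ^ 2 := pow_pos (norm_pos_iff.mpr hx0) 2
    have hAle : RCLike.re (star ⇑x ⬝ᵥ (A *ᵥ ⇑x)) ≤ hA.eigenvalues (p i) * ‖x‖ ^ 2 := by
      refine weyl_quad_le hA SA _ ?_ hxA
      rintro _ ht
      rw [hSA, Finset.mem_image] at ht
      obtain ⟨s, hs, rfl⟩ := ht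
      exact hp (Finset.mem_Iic.mp hs)
    have hBle : RCLike.re (star ⇑x ⬝ᵥ (B *ᵥ ⇑x)) ≤ hB.eigenvalues (q j) * ‖x‖ ^ 2 := by
      refine weyl_quad_le hB SB _ ?_ hxB
      rintro _ ht
      rw [hSB, Finset.mem_image] at ht
      obtain ⟨s, hs, rfl⟩ := ht
      exact hq (Finset.mem_Iic.mp hs)
    have hCge : hAB.eigenvalues (r k) * ‖x‖ ^ 2 ≤ RCLike.re (star ⇑x ⬝ᵥ ((A + B) *ᵥ ⇑x)) := by
      refine weyl_quad_ge hAB SC _ ?_ hxC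
      rintro _ ht
      rw [hSC, Finset.mem_image] at ht
      obtain ⟨s, hs, rfl⟩ := ht
      exact hr (Finset.mem_Ici.mp hs)
    have key : hAB.eigenvalues (r k) * ‖x‖ ^ 2
        ≤ (hA.eigenvalues (p i) + hB.eigenvalues (q j)) * ‖x‖ ^ 2 := by
      rw [add_mul]
      calc hAB.eigenvalues (r k) * ‖x‖ ^ 2
          ≤ RCLike.re (star ⇑x ⬝ᵥ ((A + B) *ᵥ ⇑x)) := hCge
        _ = RCLike.re (star ⇑x ⬝ᵥ (A *ᵥ ⇑x)) + RCLike.re (star ⇑x ⬝ᵥ (B *ᵥ ⇑x)) :=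
            weyl_quad_add x
        _ ≤ _ := add_le_add hAle hBle
    exact le_of_mul_le_mul_right key hxn
  · -- lower bound: i + j = k (0-based)
    intro i j k hijk
    set SA := (Finset.Ici i).image p with hSA
    set SB := (Finset.Ici j).image q with hSB
    set SC := (Finset.Iic k).image r with hSC
    obtain ⟨x, hx0, hxA, hxB, hxC⟩ := weyl_exists_common
      (Submodule.span ℂ (hA.eigenvectorBasis '' SA))
      (Submodule.span ℂ (hB.eigenvectorBasis '' SB))
      (Submodule.span ℂ (hAB.eigenvectorBasis '' SC)) (by
        rw [weyl_finrank_span_image, weyl_finrank_span_image, weyl_finrank_span_image,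
          hSA, hSB, hSC, Finset.card_image_of_injective _ p.injective,
          Finset.card_image_of_injective _ q.injective,
          Finset.card_image_of_injective _ r.injective,
          Fin.card_Ici, Fin.card_Ici, Fin.card_Iic]
        have := i.isLt; have := j.isLt; have := k.isLt
        omega)
    have hxn : (0 : ℝ) < ‖x‖ ^ 2 := pow_pos (norm_pos_iff.mpr hx0) 2
    have hAge : hA.eigenvalues (p i) * ‖x‖ ^ 2 ≤ RCLike.re (star ⇑x ⬝ᵥ (A *ᵥ ⇑x)) := by
      refine weyl_quad_ge hA SA _ ?_ hxA
      rintro _ ht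
      rw [hSA, Finset.mem_image] at ht
      obtain ⟨s, hs, rfl⟩ := ht
      exact hp (Finset.mem_Ici.mp hs)
    have hBge : hB.eigenvalues (q j) * ‖x‖ ^ 2 ≤ RCLike.re (star ⇑x ⬝ᵥ (B *ᵥ ⇑x)) := by
      refine weyl_quad_ge hB SB _ ?_ hxB
      rintro _ ht
      rw [hSB, Finset.mem_image] at ht
      obtain ⟨s, hs, rfl⟩ := ht
      exact hq (Finset.mem_Ici.mp hs)
    have hCle : RCLike.re (star ⇑x ⬝ᵥ ((A + B) *ᵥ ⇑x)) ≤ hAB.eigenvalues (r k) * ‖x‖ ^ 2 := by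
      refine weyl_quad_le hAB SC _ ?_ hxC
      rintro _ ht
      rw [hSC, Finset.mem_image] at ht
      obtain ⟨s, hs, rfl⟩ := ht
      exact hr (Finset.mem_Iic.mp hs)
    have key : (hA.eigenvalues (p i) + hB.eigenvalues (q j)) * ‖x‖ ^ 2
        ≤ hAB.eigenvalues (r k) * ‖x‖ ^ 2 := by
      rw [add_mul]
      calc hA.eigenvalues (p i) * ‖x‖ ^ 2 + hB.eigenvalues (q j) * ‖x‖ ^ 2
          ≤ RCLike.re (star ⇑x ⬝ᵥ (A *ᵥ ⇑x)) + RCLike.re (star ⇑x ⬝ᵥ (B *ᵥ ⇑x)) :=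
            add_le_add hAge hBge
        _ = RCLike.re (star ⇑x ⬝ᵥ ((A + B) *ᵥ ⇑x)) := (weyl_quad_add x).symm
        _ ≤ _ := hCle
    exact le_of_mul_le_mul_right key hxn
end

section
/- Suppose h₁,...,h_K ∈ ℂ^N are linearly independent with K ≤ N, and P ⪰ 0 with tr(P) < 1. Fix ℓ and let Z = [h₁,...,h_{ℓ−1},h_{ℓ+1},...,h_K]. Then Π_Z^⊥ h_ℓ ≠ 0, and the matrix Q = P + (1 − tr(P)) · (Π_Z^⊥ h_ℓ h_ℓᴴ Π_Z^⊥)/tr(Π_Z^⊥ h_ℓ h_ℓᴴ Π_Z^⊥) satisfies: Q ⪰ 0, tr(Q) = 1, h_kᴴ Q h_k = h_kᴴ P h_k for all k ≠ ℓ, and h_ℓᴴ Q h_ℓ > h_ℓᴴ P h_ℓ. -/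
open Matrix ComplexOrder

private theorem myconj (z : ℂ) : (starRingEnd ℂ) z * z = ((‖z‖^2 : ℝ) : ℂ) := by
  rw [mul_comm, Complex.mul_conj]
  norm_cast
  rw [Complex.sq_norm]

/-- Any covariance matrix P with tr(P) < 1 is dominated by a full-power covariance matrix Q
that keeps all power gains at receivers k ≠ ℓ and strictly increases the gain at receiver ℓ,
where Q adds the residual power in the direction of the projection of h_ℓ onto the
orthogonal complement of the other channels. -/
theorem stmt_11 (N K : ℕ) (hKN : K ≤ N) (h : Fin K → (Fin N → ℂ))
    (hli : LinearIndependent ℂ h) (ℓ : Fin K)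
    (P : Matrix (Fin N) (Fin N) ℂ) (hP : P.PosSemidef) (htr : P.trace.re < 1)
    (Pr : Matrix (Fin N) (Fin N) ℂ) (hPrH : Pr.IsHermitian) (hPrIdem : Pr * Pr = Pr)
    (hPrRange : ∀ x : Fin N → ℂ, (∀ j, j ≠ ℓ → star (h j) ⬝ᵥ x = 0) ↔ Pr *ᵥ x = x)
    (Q : Matrix (Fin N) (Fin N) ℂ)
    (hQdef : Q = P + ((1 - P.trace.re) * (∑ i, ‖(Pr *ᵥ h ℓ) i‖ ^ 2)⁻¹) •
        vecMulVec (Pr *ᵥ h ℓ) (star (Pr *ᵥ h ℓ))) :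
    Pr *ᵥ h ℓ ≠ 0 ∧
    Q.PosSemidef ∧
    Q.trace = 1 ∧
    (∀ k, k ≠ ℓ → (star (h k) ⬝ᵥ Q *ᵥ h k).re = (star (h k) ⬝ᵥ P *ᵥ h k).re) ∧
    (star (h ℓ) ⬝ᵥ P *ᵥ h ℓ).re < (star (h ℓ) ⬝ᵥ Q *ᵥ h ℓ).re := by
  classical
  set v : Fin N → ℂ := Pr *ᵥ h ℓ with hvdef
  have key : ∀ y x : Fin N → ℂ, star y ⬝ᵥ (Pr *ᵥ x) = star (Pr *ᵥ y) ⬝ᵥ x := by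
    intro y x
    rw [dotProduct_mulVec, star_mulVec, hPrH.eq]
  have hPrv : Pr *ᵥ v = v := by
    rw [hvdef, mulVec_mulVec, hPrIdem]
  have hvj : ∀ j, j ≠ ℓ → star (h j) ⬝ᵥ v = 0 := (hPrRange v).mpr hPrv
  -- v ≠ 0
  have hvne : v ≠ 0 := by
    intro hv0
    let E := EuclideanSpace ℂ (Fin N)
    let f : Fin K → E := fun k => WithLp.toLp 2 (h k)
    have hf : LinearIndependent ℂ f := hli.map' (WithLp.linearEquiv 2 ℂ (Fin N → ℂ)).symm.toLinearMap (LinearEquiv.ker _)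
    have hinner : ∀ a x : E, (inner ℂ a x : ℂ)
        = star (WithLp.ofLp a) ⬝ᵥ (WithLp.ofLp x) := by
      intro a x
      rw [EuclideanSpace.inner_eq_star_dotProduct, dotProduct_comm]
    have hmem : f ℓ ∈ (Submodule.span ℂ (f '' {ℓ}ᶜ))ᗮᗮ := by
      rw [Submodule.mem_orthogonal]
      intro x hx
      have hxj : ∀ j, j ≠ ℓ → star (h j) ⬝ᵥ (WithLp.ofLp x) = 0 := by
        intro j hj
        have hjU : f j ∈ Submodule.span ℂ (f '' {ℓ}ᶜ) :=
          Submodule.subset_span ⟨j, by simpa using hj, rfl⟩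
        have := Submodule.inner_right_of_mem_orthogonal hjU hx
        rw [hinner] at this
        exact this
      have hx' : Pr *ᵥ (WithLp.ofLp x) = WithLp.ofLp x := (hPrRange x).mp hxj
      have hz : star (h ℓ) ⬝ᵥ (WithLp.ofLp x) = 0 := by
        conv_lhs => rw [← hx']
        rw [key, ← hvdef, hv0]
        simp
      rw [hinner, star_dotProduct, hz]
      simp
    rw [Submodule.orthogonal_orthogonal] at hmem
    exact hf.notMem_span_image (by simp) hmem
  refine ⟨hvne, ?_⟩
  set S : ℝ := ∑ i, ‖v i‖ ^ 2 with hSdef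
  have hS : 0 < S := by
    obtain ⟨i, hi⟩ := Function.ne_iff.mp hvne
    exact Finset.sum_pos' (fun i _ => by positivity)
      ⟨i, Finset.mem_univ i, pow_pos (norm_pos_iff.mpr hi) 2⟩
  set c : ℝ := (1 - P.trace.re) * S⁻¹ with hcdef
  have hc : 0 < c := mul_pos (by linarith) (inv_pos.mpr hS)
  have hvv : star v ⬝ᵥ v = (S : ℂ) := by
    simp only [dotProduct, Pi.star_apply, hSdef, Complex.ofReal_sum, Complex.star_def]
    exact Finset.sum_congr rfl fun i _ => myconj (v i)
  have hmv : ∀ x : Fin N → ℂ, vecMulVec v (star v) *ᵥ x = (star v ⬝ᵥ x) • v := by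
    intro x; funext i
    simp only [mulVec, vecMulVec_apply, Pi.smul_apply, smul_eq_mul, dotProduct, Finset.sum_mul]
    exact Finset.sum_congr rfl fun j _ => by ring
  have hQdot : ∀ x : Fin N → ℂ,
      star x ⬝ᵥ (Q *ᵥ x) = star x ⬝ᵥ (P *ᵥ x) + (c : ℂ) * ((star v ⬝ᵥ x) * (star x ⬝ᵥ v)) := by
    intro x
    rw [hQdef, add_mulVec, dotProduct_add, smul_mulVec, hmv, dotProduct_smul,
      dotProduct_smul]
    simp [Complex.real_smul, smul_eq_mul, mul_assoc]
  -- Hermitian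
  have hvvH : (vecMulVec v (star v)).IsHermitian := by
    show _ = _
    ext i j
    simp [conjTranspose_apply, vecMulVec_apply, mul_comm]
  have hQH : Q.IsHermitian := by
    rw [hQdef]
    exact hP.1.add (by
      show _ = _
      rw [conjTranspose_smul, star_trivial, hvvH.eq])
  -- PosSemidef
  have hpsd : Q.PosSemidef := by
    refine PosSemidef.of_dotProduct_mulVec_nonneg hQH fun x => ?_
    rw [hQdot x]
    have h2 : 0 ≤ (c : ℂ) * ((star v ⬝ᵥ x) * (star x ⬝ᵥ v)) := by
      rw [star_dotProduct x v, mul_comm (star v ⬝ᵥ x), Complex.star_def, myconj,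
        ← Complex.ofReal_mul]
      exact Complex.zero_le_real.mpr (by positivity)
    exact add_nonneg (hP.dotProduct_mulVec_nonneg x) h2
  -- trace
  have htrvv : (vecMulVec v (star v)).trace = (S : ℂ) := by
    simp only [trace, diag_apply, vecMulVec_apply, hSdef, Complex.ofReal_sum, Pi.star_apply,
      Complex.star_def]
    exact Finset.sum_congr rfl fun i _ => by rw [mul_comm]; exact myconj (v i)
  have htrP : P.trace = (P.trace.re : ℂ) := by
    have h2 : (starRingEnd ℂ) P.trace = P.trace := by
      rw [← Complex.star_def, ← trace_conjTranspose, hP.1.eq]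
    exact (Complex.conj_eq_iff_re.mp h2).symm
  have htrQ : Q.trace = 1 := by
    have hcS : c * S = 1 - P.trace.re := by
      rw [hcdef]; field_simp
    rw [hQdef, trace_add, trace_smul, htrvv, Complex.real_smul, ← Complex.ofReal_mul, hcS]
    conv_lhs => rw [htrP]
    simp
  refine ⟨hpsd, htrQ, ?_, ?_⟩
  · intro k hk
    rw [hQdot (h k), hvj k hk]
    simp
  · have hw : star (h ℓ) ⬝ᵥ v = (S : ℂ) := by
      conv_lhs => rw [← hPrv]
      rw [key, ← hvdef, hvv]
    have hw2 : star v ⬝ᵥ h ℓ = (S : ℂ) := by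
      rw [star_dotProduct v (h ℓ), hw]
      simp
    rw [hQdot (h ℓ), hw, hw2, ← Complex.ofReal_mul, ← Complex.ofReal_mul, Complex.add_re,
      Complex.ofReal_re]
    nlinarith [mul_pos hc (mul_pos hS hS)]
end

section
/- If h₁, h₂ ∈ ℂ^N are linearly independent, λ₁ ∈ (0,1), and w is a unit eigenvector of M = λ₁ h₁h₁ᴴ − (1−λ₁) h₂h₂ᴴ corresponding to its largest eigenvalue μ, then w satisfies (λ₁‖h₁‖² Π_{h₁} + (1−λ₁)‖h₂‖² Π_{h₂}^⊥) w = (μ + (1−λ₁)‖h₂‖²) w, where Π_{h} = hhᴴ/‖h‖² and Π_h^⊥ = I − Π_h; moreover the scalar μ + (1−λ₁)‖h₂‖² is positive. -/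
open Matrix

private lemma dot_self_eq' {n : ℕ} (x : Fin n → ℂ) :
    star x ⬝ᵥ x = ((∑ i, ‖x i‖ ^ 2 : ℝ) : ℂ) := by
  rw [dotProduct]
  push_cast
  exact Finset.sum_congr rfl fun i _ => by
    rw [Pi.star_apply, RCLike.star_def, mul_comm, Complex.mul_conj, Complex.normSq_eq_norm_sq,
      Complex.ofReal_pow]

private lemma dot_self_re' {n : ℕ} (x : Fin n → ℂ) : (star x ⬝ᵥ x).re = ∑ i, ‖x i‖ ^ 2 := by
  rw [dot_self_eq', Complex.ofReal_re]

private lemma vecMulVec_mulVec' {n : ℕ} (a b v : Fin n → ℂ) :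
    vecMulVec a b *ᵥ v = (b ⬝ᵥ v) • a := by
  ext i
  simp [mulVec, vecMulVec_apply, dotProduct, Finset.mul_sum, mul_assoc, mul_comm, mul_left_comm]

private lemma rayleigh_le' {n : ℕ} (A : Matrix (Fin n) (Fin n) ℂ) (hA : A.IsHermitian)
    (v : Fin n → ℂ) :
    (star v ⬝ᵥ (A *ᵥ v)).re ≤ (⨆ i, hA.eigenvalues i) * ∑ i, ‖v i‖ ^ 2 := by
  set U : Matrix (Fin n) (Fin n) ℂ := (hA.eigenvectorUnitary : Matrix (Fin n) (Fin n) ℂ) with hU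
  set y : Fin n → ℂ := star U *ᵥ v with hy
  have hyv : star v ᵥ* U = star y := by
    rw [hy, star_mulVec, star_eq_conjTranspose, conjTranspose_conjTranspose]
  have h1 : star v ⬝ᵥ (A *ᵥ v)
      = ∑ i, (hA.eigenvalues i : ℂ) * ((starRingEnd ℂ) (y i) * y i) := by
    conv_lhs => rw [hA.spectral_theorem, Unitary.conjStarAlgAut_apply]
    rw [← mulVec_mulVec, ← mulVec_mulVec, dotProduct_mulVec, hyv]
    simp only [dotProduct, vecMul_diagonal, ← hU, ← hy, Pi.star_apply, Function.comp,
      RCLike.star_def, mulVec_diagonal]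
    exact Finset.sum_congr rfl fun i _ => mul_left_comm _ _ _
  have hUU : U * star U = 1 := mem_unitaryGroup_iff.mp hA.eigenvectorUnitary.2
  have h2 : ∑ i, ‖y i‖ ^ 2 = ∑ i, ‖v i‖ ^ 2 := by
    rw [← dot_self_re', ← dot_self_re']
    congr 1
    have hsy : star y ᵥ* star U = star v := by
      rw [star_eq_conjTranspose, ← star_mulVec, hy, mulVec_mulVec, hUU, one_mulVec]
    rw [hy, dotProduct_mulVec, hsy]
  have h3 : (star v ⬝ᵥ (A *ᵥ v)).re = ∑ i, hA.eigenvalues i * ‖y i‖ ^ 2 := by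
    rw [h1, Complex.re_sum]
    exact Finset.sum_congr rfl fun i _ => by
      rw [mul_comm ((starRingEnd ℂ) (y i)), Complex.mul_conj, Complex.normSq_eq_norm_sq,
        ← Complex.ofReal_mul, Complex.ofReal_re]
  rw [h3, ← h2, Finset.mul_sum]
  refine Finset.sum_le_sum fun i _ => ?_
  exact mul_le_mul_of_nonneg_right (le_ciSup (Set.Finite.bddAbove (Set.finite_range _)) i)
    (by positivity)

/-- The eigenvector identity linking the principal-eigenvector parametrization of two-user
MISO IC efficient beamforming to the MRT/ZF convex-combination parametrization. -/
theorem stmt_12 (N : ℕ) (h₁ h₂ : Fin N → ℂ) (hli : LinearIndependent ℂ ![h₁, h₂])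
    (l : ℝ) (hl : l ∈ Set.Ioo (0:ℝ) 1)
    (M : Matrix (Fin N) (Fin N) ℂ)
    (hMdef : M = l • vecMulVec h₁ (star h₁) - (1 - l) • vecMulVec h₂ (star h₂))
    (hM : M.IsHermitian) (μ : ℝ) (hμ : μ = ⨆ i, hM.eigenvalues i)
    (w : Fin N → ℂ) (hw : (∑ i, ‖w i‖ ^ 2) = 1) (hev : M *ᵥ w = (μ : ℂ) • w) :
    ((l * ∑ i, ‖h₁ i‖ ^ 2) • ((∑ i, ‖h₁ i‖ ^ 2)⁻¹ • vecMulVec h₁ (star h₁))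
      + ((1 - l) * ∑ i, ‖h₂ i‖ ^ 2) •
        ((1 : Matrix (Fin N) (Fin N) ℂ) - (∑ i, ‖h₂ i‖ ^ 2)⁻¹ • vecMulVec h₂ (star h₂))) *ᵥ w
      = (((μ + (1 - l) * ∑ i, ‖h₂ i‖ ^ 2 : ℝ)) : ℂ) • w ∧
    0 < μ + (1 - l) * ∑ i, ‖h₂ i‖ ^ 2 := by
  obtain ⟨hl0, hl1⟩ := hl
  have h1ne : h₁ ≠ 0 := by simpa using hli.ne_zero 0
  have h2ne : h₂ ≠ 0 := by simpa using hli.ne_zero 1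
  obtain ⟨i₀, hi₀⟩ := Function.ne_iff.mp h1ne
  obtain ⟨j₀, hj₀⟩ := Function.ne_iff.mp h2ne
  simp only [Pi.zero_apply] at hi₀ hj₀
  set a : ℝ := ∑ i, ‖h₁ i‖ ^ 2 with hadef
  set b : ℝ := ∑ i, ‖h₂ i‖ ^ 2 with hbdef
  have ha : 0 < a := Finset.sum_pos' (fun j _ => by positivity)
    ⟨i₀, Finset.mem_univ i₀, pow_pos (norm_pos_iff.mpr hi₀) 2⟩
  have hb : 0 < b := Finset.sum_pos' (fun j _ => by positivity)
    ⟨j₀, Finset.mem_univ j₀, pow_pos (norm_pos_iff.mpr hj₀) 2⟩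
  have key : (l * a) • (a⁻¹ • vecMulVec h₁ (star h₁))
      + ((1 - l) * b) • ((1 : Matrix (Fin N) (Fin N) ℂ) - b⁻¹ • vecMulVec h₂ (star h₂))
      = M + ((1 - l) * b) • (1 : Matrix (Fin N) (Fin N) ℂ) := by
    rw [hMdef, smul_smul, smul_sub ((1 - l) * b), smul_smul ((1 - l) * b),
      mul_assoc l, mul_inv_cancel₀ ha.ne', mul_one, mul_assoc (1 - l),
      mul_inv_cancel₀ hb.ne', mul_one]
    module
  -- positivity of μ
  have hμ0 : 0 ≤ μ := by
    set v : Fin N → ℂ := (b : ℂ) • h₁ - (star h₂ ⬝ᵥ h₁) • h₂ with hv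
    have hvne : v ≠ 0 := by
      intro h
      have h0 : (b : ℂ) • h₁ + (-(star h₂ ⬝ᵥ h₁)) • h₂ = 0 := by
        rw [neg_smul, ← sub_eq_add_neg, ← hv, h]
      have := (LinearIndependent.pair_iff.mp hli _ _ h0).1
      exact hb.ne' (by exact_mod_cast this)
    have hdot2 : star h₂ ⬝ᵥ v = 0 := by
      rw [hv, dotProduct_sub, dotProduct_smul, dotProduct_smul, dot_self_eq' h₂, ← hbdef,
        smul_eq_mul, smul_eq_mul]
      ring
    have hquad : (star v ⬝ᵥ (M *ᵥ v)).re = l * Complex.normSq (star h₁ ⬝ᵥ v) := by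
      rw [hMdef, sub_mulVec, smul_mulVec, smul_mulVec, vecMulVec_mulVec',
        vecMulVec_mulVec', hdot2, zero_smul, smul_zero, sub_zero, ← Complex.coe_smul,
        dotProduct_smul, dotProduct_smul, star_dotProduct v h₁, RCLike.star_def,
        smul_eq_mul, smul_eq_mul, Complex.mul_conj, ← Complex.ofReal_mul,
        Complex.ofReal_re]
    have hray := rayleigh_le' M hM v
    have hvpos : 0 < ∑ i, ‖v i‖ ^ 2 := by
      obtain ⟨k, hk⟩ := Function.ne_iff.mp hvne
      simp only [Pi.zero_apply] at hk
      exact Finset.sum_pos' (fun j _ => by positivity)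
        ⟨k, Finset.mem_univ k, pow_pos (norm_pos_iff.mpr hk) 2⟩
    have h0 : 0 ≤ μ * ∑ i, ‖v i‖ ^ 2 := by
      rw [hμ]
      refine le_trans ?_ hray
      rw [hquad]
      exact mul_nonneg hl0.le (Complex.normSq_nonneg _)
    rw [mul_comm] at h0
    exact nonneg_of_mul_nonneg_right h0 hvpos
  constructor
  · rw [key, add_mulVec, hev, smul_mulVec, one_mulVec, Complex.ofReal_add, add_smul,
      ← Complex.coe_smul]
  · have : 0 < (1 - l) * b := mul_pos (by linarith) hb
    linarith
end
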